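/- Sup-norm of a uniform spherical vector tends to zero: for every fixed c > 0, if Y⁽ⁿ⁾ = (Y₁⁽ⁿ⁾,…,Yₙ⁽ⁿ⁾) is uniformly distributed on the Euclidean unit sphere S^{n-1} ⊂ ℝⁿ, then lim_{n→∞} P[max{|Y₁⁽ⁿ⁾|,…,|Yₙ⁽ⁿ⁾|} < c] = 1; equivalently, ‖Y⁽ⁿ⁾‖_∞ → 0 in probability as n → ∞. -/

import Mathlib

open MeasureTheory ProbabilityTheory Filter Metric
open scoped ENNReal NNReal Topology

noncomputable section

/-- The uniform probability measure on `[-1, 1]`. -/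
def uniformPM : Measure ℝ := (2⁻¹ : ℝ≥0∞) • (volume.restrict (Set.Icc (-1 : ℝ) 1))

instance : IsProbabilityMeasure uniformPM := by
  constructor
  rw [uniformPM, Measure.smul_apply, Measure.restrict_apply_univ, Real.volume_Icc]
  rw [show ((1 : ℝ) - (-1)) = 2 by norm_num]
  rw [ENNReal.ofReal_ofNat, smul_eq_mul, ENNReal.inv_mul_cancel] <;> simp

/-- The uniform probability measure on the unit sphere of `ℝⁿ`. -/
def sphereUniform (n : ℕ) : Measure (sphere (0 : EuclideanSpace ℝ (Fin n)) 1) :=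
  ((volume : Measure (EuclideanSpace ℝ (Fin n))).toSphere Set.univ)⁻¹ •
    (volume : Measure (EuclideanSpace ℝ (Fin n))).toSphere

/-- The projection `μ_θ` of the uniform distribution on the cube `[-1,1]ⁿ` to the line
spanned by `θ`, as a probability measure on `ℝ`. -/
def cubeProjPM (n : ℕ) (θ : EuclideanSpace ℝ (Fin n)) : ProbabilityMeasure ℝ :=
  ⟨Measure.map (fun u : Fin n → ℝ => ∑ i, u i * θ i) (Measure.pi fun _ : Fin n => uniformPM),
    Measure.isProbabilityMeasure_map (Measurable.aemeasurable (by fun_prop))⟩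

/-- The set `W` of non-increasing sequences of non-negative reals with `ℓ²`-norm at most 1. -/
def Wset : Set (ℕ → ℝ) :=
  {α | (∀ k, 0 ≤ α k) ∧ Antitone α ∧ Summable (fun k => α k ^ 2) ∧ ∑' k, α k ^ 2 ≤ 1}

/-- `IsLawNu α μ` says that `μ` is the law of
`√(1-‖α‖₂²) Z/√3 + ∑ₖ αₖ Uₖ` where `Z` is standard Gaussian, the `Uₖ` are i.i.d. uniform
on `[-1,1]`, and `Z, U₀, U₁, …` are independent. -/
def IsLawNu (α : ℕ → ℝ) (μ : Measure ℝ) : Prop :=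
  ∃ (Ω : Type) (_ : MeasurableSpace Ω) (P : Measure Ω) (Z : Ω → ℝ) (U : ℕ → Ω → ℝ),
    IsProbabilityMeasure P ∧
    Measure.map Z P = gaussianReal 0 1 ∧
    (∀ k, Measure.map (U k) P = uniformPM) ∧
    iIndepFun (fun i : ℕ => if i = 0 then Z else U (i - 1)) P ∧
    μ = Measure.map (fun ω => Real.sqrt (1 - ∑' k, α k ^ 2) * Z ω / Real.sqrt 3
        + ∑' k, α k * U k ω) P

/-- The rate function `I` of Theorem A. -/
def rateI (ν : ProbabilityMeasure ℝ) : ℝ≥0∞ :=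
  sInf {c | ∃ α ∈ Wset, (∑' k, α k ^ 2) < 1 ∧ IsLawNu α ν.toMeasure ∧
    c = ENNReal.ofReal (-(1 / 2) * Real.log (1 - ∑' k, α k ^ 2))}


/-- The Rademacher (symmetric Bernoulli) probability measure on `ℝ`. -/
def rademacherPM : Measure ℝ := (2⁻¹ : ℝ≥0∞) • (Measure.dirac (-1) + Measure.dirac 1)

instance : IsProbabilityMeasure rademacherPM := by
  constructor
  simp [rademacherPM]
  exact ENNReal.inv_two_add_inv_two

/-- The projection `μ_θ^discr` of the uniform distribution on the discrete cube `{-1,1}ⁿ`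
to the line spanned by `θ`, as a probability measure on `ℝ`. -/
def discreteCubeProjPM (n : ℕ) (θ : EuclideanSpace ℝ (Fin n)) : ProbabilityMeasure ℝ :=
  ⟨Measure.map (fun u : Fin n → ℝ => ∑ i, u i * θ i) (Measure.pi fun _ : Fin n => rademacherPM),
    Measure.isProbabilityMeasure_map (Measurable.aemeasurable (by fun_prop))⟩

/-- `IsLawNuDiscr α μ` says that `μ` is the law of `√(1-‖α‖₂²) Z + ∑ₖ αₖ Vₖ` where `Z` is
standard Gaussian, the `Vₖ` are i.i.d. Rademacher, and `Z, V₀, V₁, …` are independent. -/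
def IsLawNuDiscr (α : ℕ → ℝ) (μ : Measure ℝ) : Prop :=
  ∃ (Ω : Type) (_ : MeasurableSpace Ω) (P : Measure Ω) (Z : Ω → ℝ) (V : ℕ → Ω → ℝ),
    IsProbabilityMeasure P ∧
    Measure.map Z P = gaussianReal 0 1 ∧
    (∀ k, Measure.map (V k) P = rademacherPM) ∧
    iIndepFun (fun i : ℕ => if i = 0 then Z else V (i - 1)) P ∧
    μ = Measure.map (fun ω => Real.sqrt (1 - ∑' k, α k ^ 2) * Z ω
        + ∑' k, α k * V k ω) P

/-- The rate function `I^discr` of Theorem B. -/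
def rateIdiscr (ν : ProbabilityMeasure ℝ) : ℝ≥0∞ :=
  sInf {c | ∃ α ∈ Wset, (∑' k, α k ^ 2) < 1 ∧ IsLawNuDiscr α ν.toMeasure ∧
    c = ENNReal.ofReal (-(1 / 2) * Real.log (1 - ∑' k, α k ^ 2))}

/-- The rate function `J(α) = -½ log (1 - ‖α‖₂²)` on `W` (with value `∞` when `‖α‖₂ = 1`). -/
def rateJ (α : ℕ → ℝ) : ℝ≥0∞ :=
  if (∑' k, α k ^ 2) < 1 then ENNReal.ofReal (-(1 / 2) * Real.log (1 - ∑' k, α k ^ 2)) else ⊤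

/-- The decreasing order statistics of the absolute values of the coordinates of `y`. -/
def ordStat {n : ℕ} (y : Fin n → ℝ) : Fin n → ℝ :=
  fun k => |y (Tuple.sort (fun i => -|y i|) k)|

/-- The random element `η_n` of `W`: the decreasing order statistics of the absolute values of
the coordinates of a point of the sphere, padded by zeros. -/
def eta {n : ℕ} (θ : sphere (0 : EuclideanSpace ℝ (Fin n)) 1) : ℕ → ℝ :=
  fun k => if h : k < n then ordStat (fun i => (θ : EuclideanSpace ℝ (Fin n)) i) ⟨k, h⟩ else 0

/-- `sinc x = sin x / x` (with `sinc 0 = 1`). -/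
def rsinc (x : ℝ) : ℝ := if x = 0 then 1 else Real.sin x / x

open Set
open scoped Pointwise

def bp (m : ℕ) (r : ℝ) : Set (Fin m → ℝ) := {y | ∑ j, y j ^ 2 ≤ r ^ 2}

lemma measurableSet_bp (m : ℕ) (r : ℝ) : MeasurableSet (bp m r) := by
  apply measurableSet_le _ measurable_const
  fun_prop

lemma bp_smul (m : ℕ) {r : ℝ} (hr : 0 < r) : bp m r = r • bp m 1 := by
  ext y
  rw [Set.mem_smul_set_iff_inv_smul_mem₀ hr.ne']
  simp only [bp, Set.mem_setOf_eq, Pi.smul_apply, smul_eq_mul, mul_pow, one_pow]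
  rw [← Finset.mul_sum, inv_pow, inv_mul_le_iff₀ (by positivity), mul_one]

lemma vol_bp (m : ℕ) {r : ℝ} (hr : 0 < r) :
    volume (bp m r) = ENNReal.ofReal (r ^ m) * volume (bp m 1) := by
  rw [bp_smul m hr, Measure.addHaar_smul_of_nonneg _ hr.le, Module.finrank_fin_fun]

lemma vol_bp_pos (m : ℕ) : 0 < volume (bp m 1) := by
  have hsub : (Set.pi Set.univ fun _ : Fin m => Set.Icc (-(1/(m+1) : ℝ)) (1/(m+1))) ⊆ bp m 1 := by
    intro y hy
    simp only [Set.mem_pi, Set.mem_univ, forall_true_left, Set.mem_Icc] at hy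
    have hb : ∀ j, y j ^ 2 ≤ (1/(m+1):ℝ)^2 := by
      intro j
      have := hy j
      nlinarith [this.1, this.2]
    show ∑ j, y j ^ 2 ≤ (1:ℝ)^2
    have hm : (0:ℝ) < (m:ℝ)+1 := by positivity
    calc ∑ j, y j ^ 2 ≤ ∑ _j : Fin m, (1/(m+1):ℝ)^2 := Finset.sum_le_sum fun j _ => hb j
    _ = m * (1/(m+1):ℝ)^2 := by simp [mul_comm]
    _ ≤ 1 ^ 2 := by
        rw [div_pow, one_pow, mul_one_div, div_le_one (by positivity)]
        nlinarith [Nat.cast_nonneg (α := ℝ) m]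
  refine lt_of_lt_of_le ?_ (measure_mono hsub)
  rw [volume_pi_pi, Finset.prod_const]
  simp only [Real.volume_Icc]
  rw [pos_iff_ne_zero]
  apply pow_ne_zero
  rw [← pos_iff_ne_zero, ENNReal.ofReal_pos]
  have : (0:ℝ) < 1/(m+1) := by positivity
  linarith

lemma vol_bp_lt_top (m : ℕ) : volume (bp m 1) < ⊤ := by
  have hsub : bp m 1 ⊆ Set.pi Set.univ fun _ : Fin m => Set.Icc (-1 : ℝ) 1 := by
    intro y hy
    simp only [bp, Set.mem_setOf_eq, one_pow] at hy
    simp only [Set.mem_pi, Set.mem_univ, forall_true_left, Set.mem_Icc]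
    intro j
    have h1 : y j ^ 2 ≤ 1 := by
      refine le_trans ?_ hy
      exact Finset.single_le_sum (f := fun j => y j ^ 2) (fun i _ => sq_nonneg _) (Finset.mem_univ j)
    constructor <;> nlinarith
  refine lt_of_le_of_lt (measure_mono hsub) ?_
  rw [volume_pi_pi]
  simp [Real.volume_Icc]

lemma vol_pred (m : ℕ) (i : Fin (m+1)) {a : ℝ} (b : ℝ) :
    volume {x : Fin (m+1) → ℝ | |x i| ≤ a ∧ ∑ j : Fin m, x (i.succAbove j) ^ 2 ≤ b ^ 2}
      = ENNReal.ofReal (2*a) * volume (bp m b) := by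
  have hset : {x : Fin (m+1) → ℝ | |x i| ≤ a ∧ ∑ j : Fin m, x (i.succAbove j) ^ 2 ≤ b ^ 2}
      = (MeasurableEquiv.piFinSuccAbove (fun _ => ℝ) i) ⁻¹' ((Set.Icc (-a) a) ×ˢ bp m b) := by
    ext x
    simp [MeasurableEquiv.piFinSuccAbove, bp, abs_le, Fin.insertNthEquiv, Fin.removeNth, and_comm]
  rw [hset, volume_pi]
  rw [(measurePreserving_piFinSuccAbove (fun _ : Fin (m+1) => (volume : Measure ℝ)) i).measure_preimage
    (((measurableSet_Icc).prod (measurableSet_bp m b)).nullMeasurableSet)]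
  rw [Measure.prod_prod, Real.volume_Icc, ← volume_pi]
  congr 1
  congr 1
  ring

lemma vol_upper (m : ℕ) (i : Fin (m+1)) {c : ℝ} (hc0 : 0 < c) (hc1 : c < 1) :
    volume {x : Fin (m+1) → ℝ | ∑ j, x j ^ 2 ≤ 1 ∧ c^2 * ∑ j, x j ^ 2 ≤ x i ^ 2}
      ≤ ENNReal.ofReal (2 * Real.sqrt (1 - c^2) ^ m) * volume (bp m 1) := by
  set A := Real.sqrt (1 - c^2) with hA
  have hA0 : 0 < A := Real.sqrt_pos.2 (by nlinarith)
  have hA2 : A^2 = 1 - c^2 := Real.sq_sqrt (by nlinarith)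
  have hsub : {x : Fin (m+1) → ℝ | ∑ j, x j ^ 2 ≤ 1 ∧ c^2 * ∑ j, x j ^ 2 ≤ x i ^ 2}
      ⊆ {x : Fin (m+1) → ℝ | |x i| ≤ 1 ∧ ∑ j : Fin m, x (i.succAbove j) ^ 2 ≤ A ^ 2} := by
    rintro x ⟨h1, h2⟩
    have hS0 : (0:ℝ) ≤ ∑ j, x j ^ 2 := Finset.sum_nonneg fun j _ => sq_nonneg _
    have hxi : x i ^ 2 ≤ ∑ j, x j ^ 2 :=
      Finset.single_le_sum (f := fun j => x j ^ 2) (fun j _ => sq_nonneg _) (Finset.mem_univ i)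
    constructor
    · have : x i ^ 2 ≤ 1 := le_trans hxi h1
      nlinarith [sq_abs (x i), abs_nonneg (x i)]
    · have hsum : ∑ j, x j ^ 2 = x i ^ 2 + ∑ j : Fin m, x (i.succAbove j) ^ 2 :=
        Fin.sum_univ_succAbove (fun j => x j ^ 2) i
      rw [hA2]
      nlinarith
  calc volume _ ≤ volume {x : Fin (m+1) → ℝ | |x i| ≤ 1 ∧ ∑ j : Fin m, x (i.succAbove j) ^ 2 ≤ A ^ 2} :=
        measure_mono hsub
  _ = ENNReal.ofReal (2*1) * volume (bp m A) := vol_pred m i A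
  _ = ENNReal.ofReal (2 * A ^ m) * volume (bp m 1) := by
      rw [vol_bp m hA0, ← mul_assoc, ← ENNReal.ofReal_mul (by norm_num)]
      norm_num

lemma vol_lower (m : ℕ) {δ : ℝ} (hδ0 : 0 < δ) (hδ1 : 2*δ^2 < 1) :
    ENNReal.ofReal (2*δ) * (ENNReal.ofReal (Real.sqrt (1 - 2*δ^2) ^ m) * volume (bp m 1))
      ≤ volume {x : Fin (m+1) → ℝ | ∑ j, x j ^ 2 < 1} := by
  set B := Real.sqrt (1 - 2*δ^2) with hB
  have hB0 : 0 < B := Real.sqrt_pos.2 (by nlinarith)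
  have hB2 : B^2 = 1 - 2*δ^2 := Real.sq_sqrt (by nlinarith)
  have hsub : {x : Fin (m+1) → ℝ | |x 0| ≤ δ ∧ ∑ j : Fin m, x ((0 : Fin (m+1)).succAbove j) ^ 2 ≤ B ^ 2}
      ⊆ {x : Fin (m+1) → ℝ | ∑ j, x j ^ 2 < 1} := by
    rintro x ⟨h1, h2⟩
    have hsum : ∑ j, x j ^ 2 = x 0 ^ 2 + ∑ j : Fin m, x ((0:Fin (m+1)).succAbove j) ^ 2 :=
      Fin.sum_univ_succAbove (fun j => x j ^ 2) 0
    have hx0 : x 0 ^ 2 ≤ δ ^ 2 := by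
      have := sq_abs (x 0)
      nlinarith [abs_nonneg (x 0)]
    show ∑ j, x j ^ 2 < 1
    rw [hsum]
    nlinarith
  calc ENNReal.ofReal (2*δ) * (ENNReal.ofReal (B ^ m) * volume (bp m 1))
      = ENNReal.ofReal (2*δ) * volume (bp m B) := by rw [vol_bp m hB0]
  _ = volume {x : Fin (m+1) → ℝ | |x 0| ≤ δ ∧ ∑ j : Fin m, x ((0 : Fin (m+1)).succAbove j) ^ 2 ≤ B ^ 2} :=
      (vol_pred m 0 B).symm
  _ ≤ _ := measure_mono hsub

lemma euclid_norm_eq (m : ℕ) (x : EuclideanSpace ℝ (Fin m)) :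
    ‖x‖ = Real.sqrt (∑ j, x j ^ 2) := by
  simp [EuclideanSpace.norm_eq, Real.norm_eq_abs, sq_abs]

lemma vol_E_upper (m : ℕ) (i : Fin (m+1)) {c : ℝ} (hc0 : 0 < c) (hc1 : c < 1) :
    volume {x : EuclideanSpace ℝ (Fin (m+1)) | ‖x‖ ≤ 1 ∧ c * ‖x‖ ≤ |x i|}
      ≤ ENNReal.ofReal (2 * Real.sqrt (1 - c^2) ^ m) * volume (bp m 1) := by
  set T : Set (Fin (m+1) → ℝ) := {u | ∑ j, u j ^ 2 ≤ 1 ∧ c^2 * ∑ j, u j ^ 2 ≤ u i ^ 2} with hT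
  have hf : Measurable fun u : Fin (m+1) → ℝ => ∑ j, u j ^ 2 := by fun_prop
  have hTmeas : MeasurableSet T := by
    have : T = {u : Fin (m+1) → ℝ | ∑ j, u j ^ 2 ≤ 1}
        ∩ {u : Fin (m+1) → ℝ | c^2 * ∑ j, u j ^ 2 ≤ u i ^ 2} := rfl
    rw [this]
    exact (measurableSet_le hf measurable_const).inter
      (measurableSet_le (hf.const_mul _) (by fun_prop))
  have hsub : {x : EuclideanSpace ℝ (Fin (m+1)) | ‖x‖ ≤ 1 ∧ c * ‖x‖ ≤ |x i|}
      ⊆ ((MeasurableEquiv.toLp 2 (Fin (m+1) → ℝ)).symm) ⁻¹' T := by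
    rintro x ⟨h1, h2⟩
    have hS0 : (0:ℝ) ≤ ∑ j, x j ^ 2 := Finset.sum_nonneg fun j _ => sq_nonneg _
    have hn := euclid_norm_eq (m+1) x
    have hsq : Real.sqrt (∑ j, x j ^ 2) ^ 2 = ∑ j, x j ^ 2 := Real.sq_sqrt hS0
    have hs1 : Real.sqrt (∑ j, x j ^ 2) ≤ 1 := by rw [← hn]; exact h1
    have hs2 : c * Real.sqrt (∑ j, x j ^ 2) ≤ |x i| := by rw [← hn]; exact h2
    have ha := mul_self_le_mul_self (Real.sqrt_nonneg (∑ j, x j ^ 2)) hs1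
    have hb := mul_self_le_mul_self (by positivity) hs2
    constructor
    · show ∑ j, x j ^ 2 ≤ 1
      nlinarith
    · show c^2 * ∑ j, x j ^ 2 ≤ x i ^ 2
      nlinarith [sq_abs (x i)]
  calc volume {x : EuclideanSpace ℝ (Fin (m+1)) | ‖x‖ ≤ 1 ∧ c * ‖x‖ ≤ |x i|}
      ≤ volume (((MeasurableEquiv.toLp 2 (Fin (m+1) → ℝ)).symm) ⁻¹' T) := measure_mono hsub
  _ = volume T :=
      (EuclideanSpace.volume_preserving_symm_measurableEquiv_toLp (Fin (m+1))).measure_preimage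
        hTmeas.nullMeasurableSet
  _ ≤ _ := vol_upper m i hc0 hc1

lemma vol_E_lower (m : ℕ) {δ : ℝ} (hδ0 : 0 < δ) (hδ1 : 2*δ^2 < 1) :
    ENNReal.ofReal (2*δ) * (ENNReal.ofReal (Real.sqrt (1 - 2*δ^2) ^ m) * volume (bp m 1))
      ≤ volume (ball (0 : EuclideanSpace ℝ (Fin (m+1))) 1) := by
  set T : Set (Fin (m+1) → ℝ) := {u | ∑ j, u j ^ 2 < 1} with hT
  have hTmeas : MeasurableSet T := measurableSet_lt (by fun_prop) measurable_const
  have hsub : ((MeasurableEquiv.toLp 2 (Fin (m+1) → ℝ)).symm) ⁻¹' T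
      ⊆ ball (0 : EuclideanSpace ℝ (Fin (m+1))) 1 := by
    intro x hx
    have hx' : ∑ j, x j ^ 2 < 1 := hx
    rw [mem_ball_zero_iff, euclid_norm_eq]
    have hS0 : (0:ℝ) ≤ ∑ j, x j ^ 2 := Finset.sum_nonneg fun j _ => sq_nonneg _
    calc Real.sqrt (∑ j, x j ^ 2) < Real.sqrt 1 := Real.sqrt_lt_sqrt hS0 hx'
    _ = 1 := Real.sqrt_one
  calc ENNReal.ofReal (2*δ) * (ENNReal.ofReal (Real.sqrt (1 - 2*δ^2) ^ m) * volume (bp m 1))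
      ≤ volume T := vol_lower m hδ0 hδ1
  _ = volume (((MeasurableEquiv.toLp 2 (Fin (m+1) → ℝ)).symm) ⁻¹' T) :=
      ((EuclideanSpace.volume_preserving_symm_measurableEquiv_toLp (Fin (m+1))).measure_preimage
        hTmeas.nullMeasurableSet).symm
  _ ≤ _ := measure_mono hsub


lemma toSphere_univ_pos (m : ℕ) :
    0 < (volume : Measure (EuclideanSpace ℝ (Fin (m+1)))).toSphere Set.univ := by
  rw [Measure.toSphere_apply_univ, finrank_euclideanSpace_fin]
  exact ENNReal.mul_pos (by exact_mod_cast Nat.succ_ne_zero m)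
    (measure_ball_pos _ _ one_pos).ne'

lemma toSphere_univ_lt_top (m : ℕ) :
    (volume : Measure (EuclideanSpace ℝ (Fin (m+1)))).toSphere Set.univ < ⊤ :=
  measure_lt_top _ _

lemma sphereUniform_univ (m : ℕ) : sphereUniform (m+1) Set.univ = 1 := by
  rw [sphereUniform, Measure.smul_apply, smul_eq_mul]
  exact ENNReal.inv_mul_cancel (toSphere_univ_pos m).ne' (toSphere_univ_lt_top m).ne

lemma measurable_coord (n : ℕ) (i : Fin n) :
    Measurable fun θ : sphere (0 : EuclideanSpace ℝ (Fin n)) 1 =>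
      (θ : EuclideanSpace ℝ (Fin n)) i := by
  have h1 : Measurable fun x : EuclideanSpace ℝ (Fin n) => x i :=
    (measurable_pi_apply i).comp ((MeasurableEquiv.toLp 2 (Fin n → ℝ)).symm).measurable
  exact h1.comp measurable_subtype_coe

lemma measurableSet_badset (n : ℕ) (c : ℝ) :
    MeasurableSet {θ : sphere (0 : EuclideanSpace ℝ (Fin n)) 1 |
      ∃ i, c ≤ |(θ : EuclideanSpace ℝ (Fin n)) i|} := by
  have : {θ : sphere (0 : EuclideanSpace ℝ (Fin n)) 1 |
      ∃ i, c ≤ |(θ : EuclideanSpace ℝ (Fin n)) i|}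
      = ⋃ i, {θ : sphere (0 : EuclideanSpace ℝ (Fin n)) 1 |
          c ≤ |(θ : EuclideanSpace ℝ (Fin n)) i|} := by
    ext θ; simp
  rw [this]
  exact MeasurableSet.iUnion fun i =>
    measurableSet_le measurable_const (measurable_coord n i).abs

lemma sphere_bad_le (m : ℕ) {c : ℝ} (hc0 : 0 < c) (hc1 : c < 1) :
    sphereUniform (m+1) {θ : sphere (0 : EuclideanSpace ℝ (Fin (m+1))) 1 |
        ∃ i, c ≤ |(θ : EuclideanSpace ℝ (Fin (m+1))) i|}
      ≤ ENNReal.ofReal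
          (((m:ℝ)+1) * (2 * Real.sqrt (1-c^2) ^ m) / (c * Real.sqrt (1 - c^2/2) ^ m)) := by
  set A := Real.sqrt (1 - c^2) with hA
  set B := Real.sqrt (1 - c^2/2) with hB
  have hA0 : 0 ≤ A := Real.sqrt_nonneg _
  have hB0 : 0 < B := Real.sqrt_pos.2 (by nlinarith)
  set bad := {θ : sphere (0 : EuclideanSpace ℝ (Fin (m+1))) 1 |
      ∃ i, c ≤ |(θ : EuclideanSpace ℝ (Fin (m+1))) i|} with hbad
  have hmeas : MeasurableSet bad := measurableSet_badset (m+1) c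
  set V := volume (bp m 1) with hV
  have hV0 : V ≠ 0 := (vol_bp_pos m).ne'
  have hVt : V ≠ ⊤ := (vol_bp_lt_top m).ne
  set nn : ℝ≥0∞ := ((m+1 : ℕ) : ℝ≥0∞) with hnn
  have hn0 : nn ≠ 0 := Nat.cast_ne_zero.mpr (Nat.succ_ne_zero m)
  have hnt : nn ≠ ⊤ := ENNReal.natCast_ne_top _
  set u : ℝ≥0∞ := ENNReal.ofReal (2 * A ^ m) with hu
  set l : ℝ≥0∞ := ENNReal.ofReal (c * B ^ m) with hl
  have hl0 : l ≠ 0 := by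
    rw [hl, ← pos_iff_ne_zero, ENNReal.ofReal_pos]; positivity
  have hlt : l ≠ ⊤ := ENNReal.ofReal_ne_top
  -- upper bound on toSphere bad
  have hcone : (Set.Ioo (0:ℝ) 1 • ((↑) '' bad : Set (EuclideanSpace ℝ (Fin (m+1)))))
      ⊆ ⋃ i, {x : EuclideanSpace ℝ (Fin (m+1)) | ‖x‖ ≤ 1 ∧ c * ‖x‖ ≤ |x i|} := by
    intro x hx
    rw [Set.mem_smul] at hx
    obtain ⟨r, hr, y, hy, rfl⟩ := hx
    obtain ⟨θ, hθ, rfl⟩ := hy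
    obtain ⟨i, hi⟩ := hθ
    have hθ1 : ‖(θ : EuclideanSpace ℝ (Fin (m+1)))‖ = 1 := mem_sphere_zero_iff_norm.mp θ.2
    have hrn : ‖r • (θ : EuclideanSpace ℝ (Fin (m+1)))‖ = r := by
      rw [norm_smul, hθ1, mul_one, Real.norm_eq_abs, abs_of_pos hr.1]
    refine Set.mem_iUnion.2 ⟨i, ?_, ?_⟩
    · rw [hrn]; exact hr.2.le
    · have hcoord : (r • (θ : EuclideanSpace ℝ (Fin (m+1)))) i
          = r * (θ : EuclideanSpace ℝ (Fin (m+1))) i := rfl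
      rw [hrn, hcoord, abs_mul, abs_of_pos hr.1]
      rw [mul_comm c r]
      exact mul_le_mul_of_nonneg_left hi hr.1.le
  have hts_bad : (volume : Measure (EuclideanSpace ℝ (Fin (m+1)))).toSphere bad
      ≤ nn * (nn * (u * V)) := by
    rw [Measure.toSphere_apply' _ hmeas, finrank_euclideanSpace_fin]
    refine mul_le_mul_right ?_ nn
    calc volume (Set.Ioo (0:ℝ) 1 • ((↑) '' bad : Set (EuclideanSpace ℝ (Fin (m+1)))))
        ≤ volume (⋃ i, {x : EuclideanSpace ℝ (Fin (m+1)) | ‖x‖ ≤ 1 ∧ c * ‖x‖ ≤ |x i|}) :=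
          measure_mono hcone
    _ ≤ ∑ i : Fin (m+1), volume {x : EuclideanSpace ℝ (Fin (m+1)) | ‖x‖ ≤ 1 ∧ c * ‖x‖ ≤ |x i|} :=
          measure_iUnion_fintype_le _ _
    _ ≤ ∑ _i : Fin (m+1), u * V := Finset.sum_le_sum fun i _ => vol_E_upper m i hc0 hc1
    _ = nn * (u * V) := by
        rw [Finset.sum_const, Finset.card_univ, Fintype.card_fin, nsmul_eq_mul, ← hnn]
  -- lower bound on toSphere univ
  have hts_univ : nn * (l * V)
      ≤ (volume : Measure (EuclideanSpace ℝ (Fin (m+1)))).toSphere Set.univ := by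
    rw [Measure.toSphere_apply_univ, finrank_euclideanSpace_fin]
    refine mul_le_mul_right ?_ nn
    have h2δ : (2 : ℝ) * (c/2) = c := by ring
    have hB' : 1 - 2*(c/2)^2 = 1 - c^2/2 := by ring
    have := vol_E_lower m (δ := c/2) (by positivity) (by nlinarith)
    rw [h2δ, hB', ← hB] at this
    refine le_trans (le_of_eq ?_) this
    rw [hl, ENNReal.ofReal_mul hc0.le, mul_assoc]
  -- combine
  have hmain : sphereUniform (m+1) bad ≤ (nn * (l * V))⁻¹ * (nn * (nn * (u * V))) := by
    rw [sphereUniform, Measure.smul_apply, smul_eq_mul]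
    exact mul_le_mul' (ENNReal.inv_le_inv' hts_univ) hts_bad
  refine le_trans hmain (le_of_eq ?_)
  rw [ENNReal.mul_inv (Or.inl hn0) (Or.inl hnt), ENNReal.mul_inv (Or.inl hl0) (Or.inl hlt)]
  calc nn⁻¹ * (l⁻¹ * V⁻¹) * (nn * (nn * (u * V)))
      = (nn⁻¹ * nn) * ((V⁻¹ * V) * (nn * u * l⁻¹)) := by ring
  _ = nn * u * l⁻¹ := by
      rw [ENNReal.inv_mul_cancel hn0 hnt, ENNReal.inv_mul_cancel hV0 hVt, one_mul, one_mul]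
  _ = ENNReal.ofReal (((m:ℝ)+1) * (2 * A ^ m)) * l⁻¹ := by
      rw [ENNReal.ofReal_mul (by positivity), hu, hnn]
      congr 1
      rw [← ENNReal.ofReal_natCast (m+1)]
      congr 1
      push_cast; ring
  _ = ENNReal.ofReal (((m:ℝ)+1) * (2 * A ^ m)) / l := by rw [div_eq_mul_inv]
  _ = ENNReal.ofReal (((m:ℝ)+1) * (2 * A ^ m) / (c * B ^ m)) := by
      rw [hl, ENNReal.ofReal_div_of_pos (by positivity)]

theorem sup_norm_sphere_tendsto_zero (c : ℝ) (hc : 0 < c) :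
    Tendsto (fun n : ℕ => sphereUniform n
        {θ | ∀ i, |(θ : EuclideanSpace ℝ (Fin n)) i| < c})
      atTop (𝓝 (1 : ℝ≥0∞)) := by
  set c' := min c (1/2) with hc'def
  have hc'0 : 0 < c' := lt_min hc (by norm_num)
  have hc'1 : c' < 1 := lt_of_le_of_lt (min_le_right _ _) (by norm_num)
  have hc'c : c' ≤ c := min_le_left _ _
  set A := Real.sqrt (1 - c'^2) with hA
  set B := Real.sqrt (1 - c'^2/2) with hB
  have hA0 : 0 ≤ A := Real.sqrt_nonneg _
  have hBpos : 0 < B := Real.sqrt_pos.2 (by nlinarith)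
  have hAB : A < B := Real.sqrt_lt_sqrt (by nlinarith) (by nlinarith)
  have hq0 : 0 ≤ A / B := by positivity
  have hq1 : A / B < 1 := (div_lt_one hBpos).2 hAB
  set g : ℕ → ℝ := fun m => ((m:ℝ)+1) * (2 * A ^ m) / (c' * B ^ m) with hg_def
  have hg : Tendsto g atTop (𝓝 0) := by
    have h1 := tendsto_self_mul_const_pow_of_lt_one hq0 hq1
    have h2 := tendsto_pow_atTop_nhds_zero_of_lt_one hq0 hq1
    have h3 : Tendsto (fun m : ℕ => ((m:ℝ)+1) * (A/B)^m) atTop (𝓝 0) := by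
      have := h1.add h2
      rw [add_zero] at this
      exact this.congr fun m => by ring
    have h4 := h3.const_mul (2/c')
    rw [mul_zero] at h4
    refine h4.congr fun m => ?_
    rw [hg_def]
    have hBm : B ^ m ≠ 0 := by positivity
    field_simp [div_pow]
    rw [div_pow, div_mul_cancel₀ _ hBm]
  set bad : ℕ → ℝ≥0∞ := fun n => sphereUniform n
    {θ | ∃ i, c' ≤ |(θ : EuclideanSpace ℝ (Fin n)) i|} with hbad_def
  set upper : ℕ → ℝ≥0∞ := fun n => ENNReal.ofReal (g (n-1)) with hupper_def
  have hupper : Tendsto upper atTop (𝓝 0) := by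
    have := ENNReal.tendsto_ofReal (hg.comp (tendsto_sub_atTop_nat 1))
    simpa using this
  have hband : ∀ᶠ n in atTop, bad n ≤ upper n := by
    filter_upwards [eventually_ge_atTop 1] with n hn
    obtain ⟨m, rfl⟩ := Nat.exists_eq_succ_of_ne_zero (by omega : n ≠ 0)
    have := sphere_bad_le m hc'0 hc'1
    rw [← hA, ← hB] at this
    exact this
  have hbad0 : Tendsto bad atTop (𝓝 0) :=
    tendsto_of_tendsto_of_tendsto_of_le_of_le' tendsto_const_nhds hupper
      (Eventually.of_forall fun n => zero_le) hband
  have hlow : Tendsto (fun n => 1 - bad n) atTop (𝓝 1) := by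
    have := ENNReal.Tendsto.sub (tendsto_const_nhds (x := (1:ℝ≥0∞))) hbad0
      (Or.inl ENNReal.one_ne_top)
    simpa using this
  refine tendsto_of_tendsto_of_tendsto_of_le_of_le' hlow tendsto_const_nhds ?_ ?_
  · filter_upwards [eventually_ge_atTop 1] with n hn
    obtain ⟨m, rfl⟩ := Nat.exists_eq_succ_of_ne_zero (by omega : n ≠ 0)
    have hmeas := measurableSet_badset (m+1) c'
    have hne : sphereUniform (m+1) {θ : sphere (0 : EuclideanSpace ℝ (Fin (m+1))) 1 |
        ∃ i, c' ≤ |(θ : EuclideanSpace ℝ (Fin (m+1))) i|} ≠ ⊤ := by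
      refine ne_top_of_le_ne_top ?_ (measure_mono (Set.subset_univ _))
      rw [sphereUniform_univ m]
      exact ENNReal.one_ne_top
    have hcompl := measure_compl (μ := sphereUniform (m+1)) hmeas hne
    rw [sphereUniform_univ m] at hcompl
    have hseteq : {θ : sphere (0 : EuclideanSpace ℝ (Fin (m+1))) 1 |
        ∃ i, c' ≤ |(θ : EuclideanSpace ℝ (Fin (m+1))) i|}ᶜ
        = {θ : sphere (0 : EuclideanSpace ℝ (Fin (m+1))) 1 |
            ∀ i, |(θ : EuclideanSpace ℝ (Fin (m+1))) i| < c'} := by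
      ext θ; simp [not_le]
    rw [hseteq] at hcompl
    calc (1 : ℝ≥0∞) - bad (m+1) = sphereUniform (m+1)
          {θ : sphere (0 : EuclideanSpace ℝ (Fin (m+1))) 1 |
            ∀ i, |(θ : EuclideanSpace ℝ (Fin (m+1))) i| < c'} := hcompl.symm
    _ ≤ _ := measure_mono fun θ hθ i => lt_of_lt_of_le (hθ i) hc'c
  · filter_upwards [eventually_ge_atTop 1] with n hn
    obtain ⟨m, rfl⟩ := Nat.exists_eq_succ_of_ne_zero (by omega : n ≠ 0)
    refine le_trans (measure_mono (Set.subset_univ _)) ?_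
    rw [sphereUniform_univ m]

end
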